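/- The generating function for the number p(n, m̄, m̲) of N=2 superpartitions in sector (n | m̄, m̲) is Σ p(n,m̄,m̲) q^n ξ^{m̄} γ^{m̲} = Π_{n≥0} (1+ξq^n)(1+γq^n) / ((1-ξγq^n)(1-q^{n+1})). -/

import Mathlib

/-- An `N=2` superpartition, given by its four constituent partitions:
`lam0` collects the unmarked (plain) parts (positive, with multiplicity),
`lamBar` the overlined parts (distinct, zero allowed),
`lamUnd` the underlined parts (distinct, zero allowed),
`lamBil` the bilined parts (with multiplicity, zeros allowed). -/
structure N2SuperPartition where
  lam0 : Multiset ℕ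
  lam0_pos : (0 : ℕ) ∉ lam0
  lamBar : Finset ℕ
  lamUnd : Finset ℕ
  lamBil : Multiset ℕ

namespace N2SuperPartition

/-- Total bosonic degree `|Λ|`. -/
def degree (Λ : N2SuperPartition) : ℕ :=
  Λ.lam0.sum + Λ.lamBar.sum id + Λ.lamUnd.sum id + Λ.lamBil.sum

/-- Fermionic degree `m̄ = ℓ(λ̄) + ℓ(λ̿)`. -/
def mBar (Λ : N2SuperPartition) : ℕ := Λ.lamBar.card + Multiset.card Λ.lamBil

/-- Fermionic degree `m̲ = ℓ(λ̲) + ℓ(λ̿)`. -/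
def mUnd (Λ : N2SuperPartition) : ℕ := Λ.lamUnd.card + Multiset.card Λ.lamBil

end N2SuperPartition

/-- The number `p(n, m̄, m̲)` of `N=2` superpartitions in the sector `(n | m̄, m̲)`. -/
noncomputable def superPartitionCount (n mb mu : ℕ) : ℕ :=
  Set.ncard {Λ : N2SuperPartition | Λ.degree = n ∧ Λ.mBar = mb ∧ Λ.mUnd = mu}

/-- The generating function `P = Σ p(n,m̄,m̲) qⁿ ξ^m̄ γ^m̲`, as a formal power series in the
three variables `q = X 0`, `ξ = X 1`, `γ = X 2`. -/
noncomputable def superPartitionGF : MvPowerSeries (Fin 3) ℤ :=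
  fun d => (superPartitionCount (d 0) (d 1) (d 2) : ℤ)

open Finset MvPowerSeries

namespace SPGF

/-- exponent vector `q^a ξ^b γ^c` -/
noncomputable def qe (a b c : ℕ) : Fin 3 →₀ ℕ :=
  Finsupp.single 0 a + Finsupp.single 1 b + Finsupp.single 2 c

@[simp] lemma qe_apply_0 (a b c : ℕ) : qe a b c 0 = a := by
  simp [qe, Finsupp.single_apply]

@[simp] lemma qe_apply_1 (a b c : ℕ) : qe a b c 1 = b := by
  simp [qe, Finsupp.single_apply]

@[simp] lemma qe_apply_2 (a b c : ℕ) : qe a b c 2 = c := by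
  simp [qe, Finsupp.single_apply]

lemma eq_qe (d : Fin 3 →₀ ℕ) : d = qe (d 0) (d 1) (d 2) := by
  ext i
  fin_cases i <;> simp

lemma qe_add (a b c a' b' c' : ℕ) :
    qe a b c + qe a' b' c' = qe (a + a') (b + b') (c + c') := by
  ext i; fin_cases i <;> simp

@[simp] lemma qe_smul (i a b c : ℕ) : i • qe a b c = qe (i * a) (i * b) (i * c) := by
  ext j; fin_cases j <;> simp

lemma qe_eq_iff (a b c a' b' c' : ℕ) :
    qe a b c = qe a' b' c' ↔ a = a' ∧ b = b' ∧ c = c' := by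
  constructor
  · intro h
    refine ⟨?_, ?_, ?_⟩
    · simpa using DFunLike.congr_fun h 0
    · simpa using DFunLike.congr_fun h 1
    · simpa using DFunLike.congr_fun h 2
  · rintro ⟨rfl, rfl, rfl⟩; rfl

@[simp] lemma qe_eq_zero_iff (a b c : ℕ) : qe a b c = 0 ↔ a = 0 ∧ b = 0 ∧ c = 0 := by
  have : (0 : Fin 3 →₀ ℕ) = qe 0 0 0 := by ext i; fin_cases i <;> simp
  rw [this, qe_eq_iff]

/-- indicator power series of a set of exponents -/
noncomputable def indS (s : Set (Fin 3 →₀ ℕ)) : MvPowerSeries (Fin 3) ℤ :=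
  open Classical in fun e => if e ∈ s then 1 else 0

@[simp] lemma coeff_indS (s : Set (Fin 3 →₀ ℕ)) [DecidablePred (· ∈ s)] (e : Fin 3 →₀ ℕ) :
    MvPowerSeries.coeff (R := ℤ) e (indS s) = if e ∈ s then 1 else 0 := by
  rw [coeff_apply, indS]
  congr 1

lemma indS_pair (w : Fin 3 →₀ ℕ) (hw : w ≠ 0) :
    indS {0, w} = 1 + monomial (R := ℤ) w 1 := by
  classical
  ext e
  rw [coeff_indS, map_add, coeff_one, coeff_monomial]
  by_cases h0 : e = 0
  · subst h0
    simp [Set.mem_insert_iff, (Ne.symm hw)]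
  · by_cases hww : e = w <;> simp [h0, hww, hw, Set.mem_insert_iff]

lemma indS_geom (v : Fin 3 →₀ ℕ) (j : Fin 3) (hj : v j ≠ 0) :
    indS {x | ∃ i : ℕ, x = i • v} * (1 - monomial (R := ℤ) v 1) = 1 := by
  classical
  have key : ∀ d : Fin 3 →₀ ℕ,
      coeff (R := ℤ) d (indS {x | ∃ i : ℕ, x = i • v} * monomial (R := ℤ) v 1)
        = coeff (R := ℤ) d (indS {x | ∃ i : ℕ, x = i • v}) - (if d = 0 then 1 else 0) := by
    intro d
    rw [coeff_mul_monomial, coeff_indS]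
    by_cases hle : v ≤ d
    · rw [if_pos hle, coeff_indS, mul_one]
      simp only [Set.mem_setOf_eq]
      have hd0 : d ≠ 0 := by
        intro h; subst h
        exact hj (Nat.le_zero.mp (hle j))
      rw [if_neg hd0, sub_zero]
      congr 1
      simp only [Set.mem_setOf_eq, eq_iff_iff]
      constructor
      · rintro ⟨i, hi⟩
        exact ⟨i + 1, by rw [add_smul, one_smul, ← hi, tsub_add_cancel_of_le hle]⟩
      · rintro ⟨i, hi⟩
        cases i with
        | zero => exact absurd (by simpa using hi) hd0
        | succ i =>
          refine ⟨i, ?_⟩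
          rw [hi, succ_nsmul]
          simp
    · rw [if_neg hle]
      by_cases hd0 : d = 0
      · subst hd0
        have hex : ∃ i : ℕ, (0 : Fin 3 →₀ ℕ) = i • v := ⟨0, by simp⟩
        simp [hex]
      · have hne : ¬ ∃ i : ℕ, d = i • v := by
          rintro ⟨i, rfl⟩
          cases i with
          | zero => exact hd0 (zero_smul ℕ v)
          | succ i => exact hle (by rw [succ_nsmul]; exact le_add_self)
        simp [Set.mem_setOf_eq, hne, hd0]
  ext d
  rw [mul_sub, mul_one, map_sub, key, coeff_one]
  ring

/-- The exponent-support sets for the four kinds of factors at level `k = p.1`. -/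
def S (p : ℕ × Fin 4) : Set (Fin 3 →₀ ℕ) :=
  ![{0, qe p.1 1 0}, {0, qe p.1 0 1},
    {v | ∃ i : ℕ, v = i • qe p.1 1 1}, {v | ∃ i : ℕ, v = i • qe (p.1 + 1) 0 0}] p.2

lemma monomial_eq_0 (k : ℕ) :
    (X 1 * X 0 ^ k : MvPowerSeries (Fin 3) ℤ) = monomial (R := ℤ) (qe k 1 0) 1 := by
  have h : Finsupp.single 1 1 + Finsupp.single 0 k = qe k 1 0 := by
    ext i; fin_cases i <;> simp [qe, Finsupp.single_apply]
  rw [X_pow_eq, X, monomial_mul_monomial, one_mul, h]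

lemma monomial_eq_1 (k : ℕ) :
    (X 2 * X 0 ^ k : MvPowerSeries (Fin 3) ℤ) = monomial (R := ℤ) (qe k 0 1) 1 := by
  have h : Finsupp.single 2 1 + Finsupp.single 0 k = qe k 0 1 := by
    ext i; fin_cases i <;> simp [qe, Finsupp.single_apply]
  rw [X_pow_eq, X, monomial_mul_monomial, one_mul, h]

lemma monomial_eq_2 (k : ℕ) :
    (X 1 * X 2 * X 0 ^ k : MvPowerSeries (Fin 3) ℤ) = monomial (R := ℤ) (qe k 1 1) 1 := by
  have h : Finsupp.single 1 1 + Finsupp.single 2 1 + Finsupp.single 0 k = qe k 1 1 := by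
    ext i; fin_cases i <;> simp [qe, Finsupp.single_apply]
  rw [X_pow_eq, X, X, monomial_mul_monomial, monomial_mul_monomial, one_mul, one_mul, h]

lemma monomial_eq_3 (k : ℕ) :
    (X 0 ^ (k + 1) : MvPowerSeries (Fin 3) ℤ) = monomial (R := ℤ) (qe (k + 1) 0 0) 1 := by
  have h : Finsupp.single (0 : Fin 3) (k + 1) = qe (k + 1) 0 0 := by
    ext i; fin_cases i <;> simp [qe, Finsupp.single_apply]
  rw [X_pow_eq, h]

@[simp] lemma S_0 (k : ℕ) : S (k, 0) = {0, qe k 1 0} := rfl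
@[simp] lemma S_1 (k : ℕ) : S (k, 1) = {0, qe k 0 1} := rfl
@[simp] lemma S_2 (k : ℕ) : S (k, 2) = {v | ∃ i : ℕ, v = i • qe k 1 1} := rfl
@[simp] lemma S_3 (k : ℕ) : S (k, 3) = {v | ∃ i : ℕ, v = i • qe (k + 1) 0 0} := rfl

/-- The index set: levels `0..n`, four factor kinds each. -/
def Sfin (n : ℕ) : Finset (ℕ × Fin 4) := (range (n + 1)) ×ˢ (univ : Finset (Fin 4))

/-- The product of all indicator factors. -/
noncomputable def F (n : ℕ) : MvPowerSeries (Fin 3) ℤ := ∏ p ∈ Sfin n, indS (S p)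

lemma F_mul_denom (n : ℕ) :
    F n * ∏ k ∈ range (n + 1),
        ((1 - X 1 * X 2 * X 0 ^ k) * (1 - X 0 ^ (k + 1))) =
      ∏ k ∈ range (n + 1),
        ((1 + (X 1 : MvPowerSeries (Fin 3) ℤ) * X 0 ^ k) * (1 + X 2 * X 0 ^ k)) := by
  have hF : F n = ∏ k ∈ range (n + 1),
      (indS (S (k, 0)) * indS (S (k, 1)) * indS (S (k, 2)) * indS (S (k, 3))) := by
    rw [F, Sfin, Finset.prod_product]
    exact Finset.prod_congr rfl fun k _ => by rw [Fin.prod_univ_four]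
  rw [hF, ← Finset.prod_mul_distrib]
  refine Finset.prod_congr rfl fun k _ => ?_
  have h0 : indS (S (k, 0)) = 1 + X 1 * X 0 ^ k := by
    rw [S_0, indS_pair _ (by simp), monomial_eq_0]
  have h1 : indS (S (k, 1)) = 1 + X 2 * X 0 ^ k := by
    rw [S_1, indS_pair _ (by simp), monomial_eq_1]
  have h2 : indS (S (k, 2)) * (1 - X 1 * X 2 * X 0 ^ k) = 1 := by
    rw [S_2, monomial_eq_2]
    exact indS_geom _ 1 (by simp)
  have h3 : indS (S (k, 3)) * (1 - X 0 ^ (k + 1)) = 1 := by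
    rw [S_3, monomial_eq_3]
    exact indS_geom _ 0 (by simp)
  calc indS (S (k, 0)) * indS (S (k, 1)) * indS (S (k, 2)) * indS (S (k, 3)) *
        ((1 - X 1 * X 2 * X 0 ^ k) * (1 - X 0 ^ (k + 1)))
      = (indS (S (k, 0)) * indS (S (k, 1))) *
        ((indS (S (k, 2)) * (1 - X 1 * X 2 * X 0 ^ k)) *
          (indS (S (k, 3)) * (1 - X 0 ^ (k + 1)))) := by ring
    _ = (1 + X 1 * X 0 ^ k) * (1 + X 2 * X 0 ^ k) := by rw [h0, h1, h2, h3]; ring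

/-- Admissible exponent assignments. -/
noncomputable def T (n : ℕ) (d : Fin 3 →₀ ℕ) : Finset ((ℕ × Fin 4) →₀ (Fin 3 →₀ ℕ)) :=
  open Classical in (finsuppAntidiag (Sfin n) d).filter (fun l => ∀ p ∈ Sfin n, l p ∈ S p)

lemma coeff_F (n : ℕ) (d : Fin 3 →₀ ℕ) : coeff (R := ℤ) d (F n) = ((T n d).card : ℤ) := by
  classical
  rw [F, coeff_prod]
  have h : ∀ l ∈ finsuppAntidiag (Sfin n) d,
      ∏ p ∈ Sfin n, coeff (R := ℤ) (l p) (indS (S p))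
        = if (∀ p ∈ Sfin n, l p ∈ S p) then (1 : ℤ) else 0 := by
    intro l _
    rw [Finset.prod_congr rfl (fun p _ => coeff_indS (S p) (l p)), Finset.prod_boole]
  rw [Finset.sum_congr rfl h, Finset.sum_boole]
  congr 1

lemma multiset_count_smul_sum (m : Multiset ℕ) (s : Finset ℕ) (hs : m.toFinset ⊆ s) :
    ∑ k ∈ s, m.count k * k = m.sum := by
  have h1 : m.sum = ∑ a ∈ m.toFinset, m.count a * a := by
    conv_lhs => rw [← Multiset.map_id m]
    rw [Finset.sum_multiset_map_count]
    simp [smul_eq_mul]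
  rw [h1]
  exact (Finset.sum_subset hs (fun x _ hx => by
    simp [Multiset.count_eq_zero_of_notMem (by simpa using hx)])).symm

lemma multiset_count_card (m : Multiset ℕ) (s : Finset ℕ) (hs : m.toFinset ⊆ s) :
    ∑ k ∈ s, m.count k = Multiset.card m := by
  rw [← Multiset.toFinset_sum_count_eq]
  exact (Finset.sum_subset hs (fun x _ hx => by
    simp [Multiset.count_eq_zero_of_notMem (by simpa using hx)])).symm

lemma multiset_replicate_sum (m : Multiset ℕ) (s : Finset ℕ) (hs : m.toFinset ⊆ s) :
    ∑ k ∈ s, Multiset.replicate (m.count k) k = m := by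
  have h : ∀ k ∈ s, Multiset.replicate (m.count k) k = m.count k • ({k} : Multiset ℕ) :=
    fun k _ => (Multiset.nsmul_singleton _ _).symm
  rw [Finset.sum_congr rfl h,
    ← Finset.sum_subset hs (fun x _ hx => by
      simp [Multiset.count_eq_zero_of_notMem (by simpa using hx)])]
  exact Multiset.toFinset_sum_count_nsmul_eq m

/-- The forward map from a superpartition to an exponent assignment. -/
noncomputable def Lmap (Λ : N2SuperPartition) : (ℕ × Fin 4) →₀ (Fin 3 →₀ ℕ) :=
  Finsupp.onFinset
    ((Λ.lamBar ∪ Λ.lamUnd ∪ Λ.lamBil.toFinset ∪ Λ.lam0.toFinset.image (· - 1)) ×ˢ univ)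
    (fun p =>
      ![if p.1 ∈ Λ.lamBar then qe p.1 1 0 else 0,
        if p.1 ∈ Λ.lamUnd then qe p.1 0 1 else 0,
        (Λ.lamBil.count p.1) • qe p.1 1 1,
        (Λ.lam0.count (p.1 + 1)) • qe (p.1 + 1) 0 0] p.2)
    (by
      rintro ⟨k, j⟩ h
      rw [Finset.mem_product]
      refine ⟨?_, Finset.mem_univ _⟩
      fin_cases j
      · simp only [Matrix.cons_val_zero] at h
        by_cases hk : k ∈ Λ.lamBar
        · exact Finset.mem_union_left _ (Finset.mem_union_left _ (Finset.mem_union_left _ hk))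
        · rw [if_neg hk] at h; exact absurd rfl h
      · simp only [Matrix.cons_val_one, Matrix.head_cons] at h
        by_cases hk : k ∈ Λ.lamUnd
        · exact Finset.mem_union_left _ (Finset.mem_union_left _ (Finset.mem_union_right _ hk))
        · rw [if_neg hk] at h; exact absurd rfl h
      · simp only [Matrix.cons_val_two, Matrix.tail_cons, Matrix.head_cons] at h
        have hc : Λ.lamBil.count k ≠ 0 := by
          intro h0; rw [h0, zero_smul] at h; exact h rfl
        exact Finset.mem_union_left _ (Finset.mem_union_right _
          (by simpa using Multiset.count_pos.mp (Nat.pos_of_ne_zero hc)))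
      · simp only [Matrix.cons_val_three, Matrix.tail_cons, Matrix.head_cons] at h
        have hc : Λ.lam0.count (k + 1) ≠ 0 := by
          intro h0; rw [h0, zero_smul] at h; exact h rfl
        refine Finset.mem_union_right _ (Finset.mem_image.mpr ⟨k + 1, ?_, rfl⟩)
        simpa using Multiset.count_pos.mp (Nat.pos_of_ne_zero hc))

@[simp] lemma Lmap_0 (Λ : N2SuperPartition) (k : ℕ) :
    Lmap Λ (k, 0) = if k ∈ Λ.lamBar then qe k 1 0 else 0 := rfl

@[simp] lemma Lmap_1 (Λ : N2SuperPartition) (k : ℕ) :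
    Lmap Λ (k, 1) = if k ∈ Λ.lamUnd then qe k 0 1 else 0 := rfl

@[simp] lemma Lmap_2 (Λ : N2SuperPartition) (k : ℕ) :
    Lmap Λ (k, 2) = (Λ.lamBil.count k) • qe k 1 1 := rfl

@[simp] lemma Lmap_3 (Λ : N2SuperPartition) (k : ℕ) :
    Lmap Λ (k, 3) = (Λ.lam0.count (k + 1)) • qe (k + 1) 0 0 := rfl

/-- All parts bounded appropriately by `n`. -/
def Bnd (n : ℕ) (Λ : N2SuperPartition) : Prop :=
  Λ.lamBar ⊆ range (n + 1) ∧ Λ.lamUnd ⊆ range (n + 1) ∧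
    Λ.lamBil.toFinset ⊆ range (n + 1) ∧ Λ.lam0.toFinset ⊆ Finset.Icc 1 (n + 1)

lemma Bnd_of_degree_le {n : ℕ} {Λ : N2SuperPartition} (h : Λ.degree ≤ n) : Bnd n Λ := by
  have hdeg := h
  rw [N2SuperPartition.degree] at hdeg
  refine ⟨?_, ?_, ?_, ?_⟩
  · intro k hk
    rw [Finset.mem_range]
    have h1 := Finset.single_le_sum (f := id) (fun i _ => Nat.zero_le _) hk
    have h2 : k ≤ Λ.lamBar.sum id := h1
    omega
  · intro k hk
    rw [Finset.mem_range]
    have h1 := Finset.single_le_sum (f := id) (fun i _ => Nat.zero_le _) hk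
    have h2 : k ≤ Λ.lamUnd.sum id := h1
    omega
  · intro k hk
    rw [Finset.mem_range]
    have := Multiset.single_le_sum (fun y _ => Nat.zero_le y) k (Multiset.mem_toFinset.mp hk)
    omega
  · intro k hk
    rw [Finset.mem_Icc]
    have hk' := Multiset.mem_toFinset.mp hk
    have h1 := Multiset.single_le_sum (fun y _ => Nat.zero_le y) k hk'
    have h2 : k ≠ 0 := fun h0 => Λ.lam0_pos (h0 ▸ hk')
    omega

lemma Lmap_support {n : ℕ} {Λ : N2SuperPartition} (h : Bnd n Λ) :
    (Lmap Λ).support ⊆ Sfin n := by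
  obtain ⟨h1, h2, h3, h4⟩ := h
  refine (Finsupp.support_onFinset_subset).trans ?_
  rw [Sfin]
  refine Finset.product_subset_product ?_ (le_refl _)
  intro k hk
  simp only [Finset.mem_union] at hk
  rcases hk with ((hk | hk) | hk) | hk
  · exact h1 hk
  · exact h2 hk
  · exact h3 hk
  · obtain ⟨x, hx, rfl⟩ := Finset.mem_image.mp hk
    have := Finset.mem_Icc.mp (h4 hx)
    rw [Finset.mem_range]
    omega

lemma Lmap_mem_S (Λ : N2SuperPartition) (p : ℕ × Fin 4) : Lmap Λ p ∈ S p := by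
  obtain ⟨k, j⟩ := p
  fin_cases j
  · show Lmap Λ (k, 0) ∈ S (k, 0)
    rw [Lmap_0, S_0]
    split_ifs
    · exact Set.mem_insert_of_mem _ rfl
    · exact Set.mem_insert _ _
  · show Lmap Λ (k, 1) ∈ S (k, 1)
    rw [Lmap_1, S_1]
    split_ifs
    · exact Set.mem_insert_of_mem _ rfl
    · exact Set.mem_insert _ _
  · show Lmap Λ (k, 2) ∈ S (k, 2)
    rw [Lmap_2, S_2]; exact ⟨_, rfl⟩
  · show Lmap Λ (k, 3) ∈ S (k, 3)
    rw [Lmap_3, S_3]; exact ⟨_, rfl⟩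

lemma Lmap_sum {n : ℕ} {Λ : N2SuperPartition} (h : Bnd n Λ) :
    ∑ p ∈ Sfin n, Lmap Λ p = qe Λ.degree Λ.mBar Λ.mUnd := by
  obtain ⟨h1, h2, h3, h4⟩ := h
  have hsplit : ∑ p ∈ Sfin n, Lmap Λ p =
      ∑ k ∈ range (n + 1),
        (Lmap Λ (k, 0) + Lmap Λ (k, 1) + Lmap Λ (k, 2) + Lmap Λ (k, 3)) := by
    rw [Sfin, Finset.sum_product]
    exact Finset.sum_congr rfl fun k _ => Fin.sum_univ_four _
  rw [hsplit]
  have key : ∀ i : Fin 3,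
      (∑ k ∈ range (n + 1),
        (Lmap Λ (k, 0) + Lmap Λ (k, 1) + Lmap Λ (k, 2) + Lmap Λ (k, 3))) i =
      ∑ k ∈ range (n + 1),
        ((Lmap Λ (k, 0)) i + (Lmap Λ (k, 1)) i + (Lmap Λ (k, 2)) i + (Lmap Λ (k, 3)) i) := by
    intro i
    rw [Finsupp.finset_sum_apply]
    exact Finset.sum_congr rfl fun k _ => by simp [Finsupp.add_apply]
  have e0 : ∀ k, (Lmap Λ (k, 0)) 0 = (if k ∈ Λ.lamBar then k else 0) := by
    intro k; rw [Lmap_0, apply_ite (fun v : Fin 3 →₀ ℕ => v 0)]; simp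
  have e0' : ∀ k, (Lmap Λ (k, 0)) 1 = (if k ∈ Λ.lamBar then 1 else 0) := by
    intro k; rw [Lmap_0, apply_ite (fun v : Fin 3 →₀ ℕ => v 1)]; simp
  have e0'' : ∀ k, (Lmap Λ (k, 0)) 2 = 0 := by
    intro k; rw [Lmap_0, apply_ite (fun v : Fin 3 →₀ ℕ => v 2)]; simp
  have e1 : ∀ k, (Lmap Λ (k, 1)) 0 = (if k ∈ Λ.lamUnd then k else 0) := by
    intro k; rw [Lmap_1, apply_ite (fun v : Fin 3 →₀ ℕ => v 0)]; simp
  have e1' : ∀ k, (Lmap Λ (k, 1)) 1 = 0 := by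
    intro k; rw [Lmap_1, apply_ite (fun v : Fin 3 →₀ ℕ => v 1)]; simp
  have e1'' : ∀ k, (Lmap Λ (k, 1)) 2 = (if k ∈ Λ.lamUnd then 1 else 0) := by
    intro k; rw [Lmap_1, apply_ite (fun v : Fin 3 →₀ ℕ => v 2)]; simp
  have hIco : Λ.lam0.toFinset ⊆ Finset.Ico 1 (n + 2) := by
    rwa [show n + 2 = n + 1 + 1 from rfl, Finset.Ico_add_one_right_eq_Icc]
  have hreindex : ∀ g : ℕ → ℕ, ∑ k ∈ range (n + 1), g (k + 1) = ∑ j ∈ Finset.Ico 1 (n + 2), g j := by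
    intro g
    rw [Finset.sum_Ico_eq_sum_range]
    simp [Nat.add_comm]
  have c0 : (∑ k ∈ range (n + 1),
      (Lmap Λ (k, 0) + Lmap Λ (k, 1) + Lmap Λ (k, 2) + Lmap Λ (k, 3))) 0 = Λ.degree := by
    rw [key 0]
    have : ∀ k ∈ range (n + 1),
        (Lmap Λ (k, 0)) 0 + (Lmap Λ (k, 1)) 0 + (Lmap Λ (k, 2)) 0 + (Lmap Λ (k, 3)) 0 =
        (if k ∈ Λ.lamBar then k else 0) + (if k ∈ Λ.lamUnd then k else 0)
          + Λ.lamBil.count k * k + Λ.lam0.count (k + 1) * (k + 1) := by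
      intro k _
      rw [e0, e1, Lmap_2, Lmap_3]
      simp [Finsupp.smul_apply]
    rw [Finset.sum_congr rfl this, Finset.sum_add_distrib, Finset.sum_add_distrib,
      Finset.sum_add_distrib]
    rw [Finset.sum_ite_mem, Finset.inter_eq_right.mpr h1,
      Finset.sum_ite_mem, Finset.inter_eq_right.mpr h2,
      multiset_count_smul_sum _ _ h3,
      hreindex (fun j => Λ.lam0.count j * j), multiset_count_smul_sum _ _ hIco]
    rw [N2SuperPartition.degree]
    have hb : ∑ k ∈ Λ.lamBar, k = Λ.lamBar.sum id := rfl
    have hu : ∑ k ∈ Λ.lamUnd, k = Λ.lamUnd.sum id := rfl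
    omega
  have c1 : (∑ k ∈ range (n + 1),
      (Lmap Λ (k, 0) + Lmap Λ (k, 1) + Lmap Λ (k, 2) + Lmap Λ (k, 3))) 1 = Λ.mBar := by
    rw [key 1]
    have : ∀ k ∈ range (n + 1),
        (Lmap Λ (k, 0)) 1 + (Lmap Λ (k, 1)) 1 + (Lmap Λ (k, 2)) 1 + (Lmap Λ (k, 3)) 1 =
        (if k ∈ Λ.lamBar then 1 else 0) + Λ.lamBil.count k := by
      intro k _
      rw [e0', e1', Lmap_2, Lmap_3]
      simp [Finsupp.smul_apply]
    rw [Finset.sum_congr rfl this, Finset.sum_add_distrib]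
    rw [Finset.sum_ite_mem, Finset.inter_eq_right.mpr h1,
      multiset_count_card _ _ h3, Finset.sum_const, smul_eq_mul, mul_one,
      N2SuperPartition.mBar]
  have c2 : (∑ k ∈ range (n + 1),
      (Lmap Λ (k, 0) + Lmap Λ (k, 1) + Lmap Λ (k, 2) + Lmap Λ (k, 3))) 2 = Λ.mUnd := by
    rw [key 2]
    have : ∀ k ∈ range (n + 1),
        (Lmap Λ (k, 0)) 2 + (Lmap Λ (k, 1)) 2 + (Lmap Λ (k, 2)) 2 + (Lmap Λ (k, 3)) 2 =
        (if k ∈ Λ.lamUnd then 1 else 0) + Λ.lamBil.count k := by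
      intro k _
      rw [e0'', e1'', Lmap_2, Lmap_3]
      simp [Finsupp.smul_apply]
    rw [Finset.sum_congr rfl this, Finset.sum_add_distrib]
    rw [Finset.sum_ite_mem, Finset.inter_eq_right.mpr h2,
      multiset_count_card _ _ h3, Finset.sum_const, smul_eq_mul, mul_one,
      N2SuperPartition.mUnd]
  conv_lhs => rw [eq_qe (∑ k ∈ range (n + 1),
      (Lmap Λ (k, 0) + Lmap Λ (k, 1) + Lmap Λ (k, 2) + Lmap Λ (k, 3)))]
  rw [c0, c1, c2]

/-- The inverse map from an exponent assignment to a superpartition. -/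
noncomputable def Minv (n : ℕ) (l : (ℕ × Fin 4) →₀ (Fin 3 →₀ ℕ)) : N2SuperPartition where
  lam0 := ∑ k ∈ range (n + 1), Multiset.replicate ((l (k, 3)) 0 / (k + 1)) (k + 1)
  lam0_pos := by
    intro h
    obtain ⟨k, hk, hmem⟩ := Multiset.mem_sum.mp h
    exact (Nat.succ_ne_zero k) (Multiset.eq_of_mem_replicate hmem).symm
  lamBar := (range (n + 1)).filter fun k => l (k, 0) ≠ 0
  lamUnd := (range (n + 1)).filter fun k => l (k, 1) ≠ 0
  lamBil := ∑ k ∈ range (n + 1), Multiset.replicate ((l (k, 2)) 1) k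

lemma Minv_count_bil (n : ℕ) (l : (ℕ × Fin 4) →₀ (Fin 3 →₀ ℕ)) (k : ℕ) :
    (Minv n l).lamBil.count k = if k ∈ range (n + 1) then (l (k, 2)) 1 else 0 := by
  rw [Minv, Multiset.count_sum']
  have h : ∀ k' ∈ range (n + 1),
      Multiset.count k (Multiset.replicate ((l (k', 2)) 1) k') =
      if k = k' then (l (k', 2)) 1 else 0 := by
    intro k' _
    rw [Multiset.count_replicate]
    simp [eq_comm]
  rw [Finset.sum_congr rfl h]
  exact Finset.sum_ite_eq (range (n + 1)) k _

lemma Minv_count_lam0 (n : ℕ) (l : (ℕ × Fin 4) →₀ (Fin 3 →₀ ℕ)) (k : ℕ) :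
    (Minv n l).lam0.count (k + 1) = if k ∈ range (n + 1) then (l (k, 3)) 0 / (k + 1) else 0 := by
  rw [Minv, Multiset.count_sum']
  have h : ∀ k' ∈ range (n + 1),
      Multiset.count (k + 1) (Multiset.replicate ((l (k', 3)) 0 / (k' + 1)) (k' + 1)) =
      if k = k' then (l (k', 3)) 0 / (k' + 1) else 0 := by
    intro k' _
    rw [Multiset.count_replicate]
    congr 1
    simp [Nat.add_right_cancel_iff, eq_comm]
  rw [Finset.sum_congr rfl h]
  exact Finset.sum_ite_eq (range (n + 1)) k _

lemma Bnd_Minv (n : ℕ) (l : (ℕ × Fin 4) →₀ (Fin 3 →₀ ℕ)) : Bnd n (Minv n l) := by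
  refine ⟨Finset.filter_subset _ _, Finset.filter_subset _ _, ?_, ?_⟩
  · intro k hk
    have hk2 : k ∈ (∑ k ∈ range (n + 1), Multiset.replicate ((l (k, 2)) 1) k).toFinset := hk
    obtain ⟨k', hk', hmem⟩ := Multiset.mem_sum.mp (Multiset.mem_toFinset.mp hk2)
    rwa [Multiset.eq_of_mem_replicate hmem]
  · intro k hk
    have hk2 : k ∈ (∑ k ∈ range (n + 1),
        Multiset.replicate ((l (k, 3)) 0 / (k + 1)) (k + 1)).toFinset := hk
    obtain ⟨k', hk', hmem⟩ := Multiset.mem_sum.mp (Multiset.mem_toFinset.mp hk2)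
    rw [Multiset.eq_of_mem_replicate hmem]
    rw [Finset.mem_range] at hk'
    rw [Finset.mem_Icc]
    omega

lemma mem_T {n : ℕ} {d : Fin 3 →₀ ℕ} {l : (ℕ × Fin 4) →₀ (Fin 3 →₀ ℕ)} :
    l ∈ T n d ↔ ((Sfin n).sum l = d ∧ l.support ⊆ Sfin n) ∧ ∀ p ∈ Sfin n, l p ∈ S p := by
  classical
  rw [T, Finset.mem_filter, Finset.mem_finsuppAntidiag]

lemma L_Minv {n : ℕ} {d : Fin 3 →₀ ℕ} {l : (ℕ × Fin 4) →₀ (Fin 3 →₀ ℕ)}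
    (hl : l ∈ T n d) : Lmap (Minv n l) = l := by
  obtain ⟨⟨-, hsupp⟩, hS⟩ := mem_T.mp hl
  refine Finsupp.ext fun p => ?_
  obtain ⟨k, j⟩ := p
  by_cases hk : k ∈ range (n + 1)
  · have hSp := hS (k, j) (Finset.mem_product.mpr ⟨hk, Finset.mem_univ _⟩)
    fin_cases j
    · have hSp' : l (k, 0) ∈ ({0, qe k 1 0} : Set (Fin 3 →₀ ℕ)) := hSp
      show Lmap (Minv n l) (k, 0) = l (k, 0)
      rw [Lmap_0]
      have hmem : k ∈ (Minv n l).lamBar ↔ l (k, 0) ≠ 0 := by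
        rw [Minv]
        simp [Finset.mem_filter, hk]
      rcases hSp' with h0 | h0
      · rw [if_neg (by rw [hmem]; exact fun hc => hc h0), h0]
      · rw [Set.mem_singleton_iff] at h0
        rw [if_pos (hmem.mpr (by rw [h0]; simp)), h0]
    · have hSp' : l (k, 1) ∈ ({0, qe k 0 1} : Set (Fin 3 →₀ ℕ)) := hSp
      show Lmap (Minv n l) (k, 1) = l (k, 1)
      rw [Lmap_1]
      have hmem : k ∈ (Minv n l).lamUnd ↔ l (k, 1) ≠ 0 := by
        rw [Minv]
        simp [Finset.mem_filter, hk]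
      rcases hSp' with h0 | h0
      · rw [if_neg (by rw [hmem]; exact fun hc => hc h0), h0]
      · rw [Set.mem_singleton_iff] at h0
        rw [if_pos (hmem.mpr (by rw [h0]; simp)), h0]
    · obtain ⟨i, hi⟩ : ∃ i : ℕ, l (k, 2) = i • qe k 1 1 := hSp
      show Lmap (Minv n l) (k, 2) = l (k, 2)
      rw [Lmap_2, Minv_count_bil, if_pos hk]
      rw [hi]
      simp
    · obtain ⟨i, hi⟩ : ∃ i : ℕ, l (k, 3) = i • qe (k + 1) 0 0 := hSp
      show Lmap (Minv n l) (k, 3) = l (k, 3)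
      rw [Lmap_3, Minv_count_lam0, if_pos hk]
      rw [hi]
      simp [Nat.mul_div_cancel _ (Nat.succ_pos k)]
  · have hl0 : l (k, j) = 0 := by
      by_contra hc
      exact (by simpa [Sfin, hk] using hsupp (Finsupp.mem_support_iff.mpr hc) : False)
    rw [hl0]
    fin_cases j
    · show Lmap (Minv n l) (k, 0) = 0
      rw [Lmap_0, if_neg]
      rw [Minv]
      simp [Finset.mem_filter, hk]
    · show Lmap (Minv n l) (k, 1) = 0
      rw [Lmap_1, if_neg]
      rw [Minv]
      simp [Finset.mem_filter, hk]
    · show Lmap (Minv n l) (k, 2) = 0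
      rw [Lmap_2, Minv_count_bil, if_neg hk, zero_smul]
    · show Lmap (Minv n l) (k, 3) = 0
      rw [Lmap_3, Minv_count_lam0, if_neg hk, zero_smul]

lemma N2ext {Λ₁ Λ₂ : N2SuperPartition} (h0 : Λ₁.lam0 = Λ₂.lam0) (h1 : Λ₁.lamBar = Λ₂.lamBar)
    (h2 : Λ₁.lamUnd = Λ₂.lamUnd) (h3 : Λ₁.lamBil = Λ₂.lamBil) : Λ₁ = Λ₂ := by
  cases Λ₁; cases Λ₂
  simp_all

lemma Minv_Lmap {n : ℕ} {Λ : N2SuperPartition} (h : Bnd n Λ) : Minv n (Lmap Λ) = Λ := by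
  obtain ⟨h1, h2, h3, h4⟩ := h
  have hIco : Λ.lam0.toFinset ⊆ Finset.Ico 1 (n + 2) := by rwa [show n + 2 = n + 1 + 1 from rfl, Finset.Ico_add_one_right_eq_Icc]
  refine N2ext ?_ ?_ ?_ ?_
  · show (∑ k ∈ range (n + 1),
        Multiset.replicate (((Lmap Λ) (k, 3)) 0 / (k + 1)) (k + 1)) = Λ.lam0
    have h : ∀ k ∈ range (n + 1),
        Multiset.replicate (((Lmap Λ) (k, 3)) 0 / (k + 1)) (k + 1) =
        Multiset.replicate (Λ.lam0.count (k + 1)) (k + 1) := by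
      intro k _
      rw [Lmap_3]
      congr 1
      simp [Nat.mul_div_cancel _ (Nat.succ_pos k)]
    rw [Finset.sum_congr rfl h]
    have hre : ∑ k ∈ range (n + 1), Multiset.replicate (Λ.lam0.count (k + 1)) (k + 1) =
        ∑ j ∈ Finset.Ico 1 (n + 2), Multiset.replicate (Λ.lam0.count j) j := by
      rw [Finset.sum_Ico_eq_sum_range]
      simp [Nat.add_comm]
    rw [hre]
    exact multiset_replicate_sum _ _ hIco
  · show (range (n + 1)).filter (fun k => (Lmap Λ) (k, 0) ≠ 0) = Λ.lamBar
    ext k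
    rw [Finset.mem_filter, Lmap_0]
    constructor
    · rintro ⟨-, hne⟩
      by_contra hc
      rw [if_neg hc] at hne
      exact hne rfl
    · intro hk
      refine ⟨h1 hk, ?_⟩
      rw [if_pos hk]
      simp
  · show (range (n + 1)).filter (fun k => (Lmap Λ) (k, 1) ≠ 0) = Λ.lamUnd
    ext k
    rw [Finset.mem_filter, Lmap_1]
    constructor
    · rintro ⟨-, hne⟩
      by_contra hc
      rw [if_neg hc] at hne
      exact hne rfl
    · intro hk
      refine ⟨h2 hk, ?_⟩
      rw [if_pos hk]
      simp
  · show (∑ k ∈ range (n + 1), Multiset.replicate (((Lmap Λ) (k, 2)) 1) k) = Λ.lamBil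
    have h : ∀ k ∈ range (n + 1),
        Multiset.replicate (((Lmap Λ) (k, 2)) 1) k =
        Multiset.replicate (Λ.lamBil.count k) k := by
      intro k _
      rw [Lmap_2]
      congr 1
      simp
    rw [Finset.sum_congr rfl h]
    exact multiset_replicate_sum _ _ h3

lemma Lmap_mem_T {n : ℕ} {d : Fin 3 →₀ ℕ} (hd : d 0 ≤ n) {Λ : N2SuperPartition}
    (hΛ : Λ.degree = d 0 ∧ Λ.mBar = d 1 ∧ Λ.mUnd = d 2) : Lmap Λ ∈ T n d := by
  have hB : Bnd n Λ := Bnd_of_degree_le (le_trans (le_of_eq hΛ.1) hd)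
  refine mem_T.mpr ⟨⟨?_, Lmap_support hB⟩, fun p _ => Lmap_mem_S Λ p⟩
  have : (Sfin n).sum (Lmap Λ) = ∑ p ∈ Sfin n, Lmap Λ p := rfl
  rw [this, Lmap_sum hB, hΛ.1, hΛ.2.1, hΛ.2.2]
  exact (eq_qe d).symm

lemma Minv_cond {n : ℕ} {d : Fin 3 →₀ ℕ} {l : (ℕ × Fin 4) →₀ (Fin 3 →₀ ℕ)}
    (hl : l ∈ T n d) :
    (Minv n l).degree = d 0 ∧ (Minv n l).mBar = d 1 ∧ (Minv n l).mUnd = d 2 := by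
  have hB : Bnd n (Minv n l) := Bnd_Minv n l
  have hsum := Lmap_sum hB
  rw [L_Minv hl] at hsum
  have hd : (Sfin n).sum l = d := (mem_T.mp hl).1.1
  have : qe (Minv n l).degree (Minv n l).mBar (Minv n l).mUnd = d := by
    rw [← hsum]; exact hd
  refine ⟨?_, ?_, ?_⟩
  · have := DFunLike.congr_fun this 0; simpa using this
  · have := DFunLike.congr_fun this 1; simpa using this
  · have := DFunLike.congr_fun this 2; simpa using this

lemma count_eq {n : ℕ} {d : Fin 3 →₀ ℕ} (hd : d 0 ≤ n) :
    superPartitionCount (d 0) (d 1) (d 2) = (T n d).card := by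
  rw [superPartitionCount, ← Nat.card_coe_set_eq, ← Nat.card_eq_finsetCard]
  refine Nat.card_congr ⟨fun Λ => ⟨Lmap Λ.1, Lmap_mem_T hd Λ.2⟩,
    fun l => ⟨Minv n l.1, Minv_cond l.2⟩, fun Λ => Subtype.ext ?_, fun l => Subtype.ext ?_⟩
  · exact Minv_Lmap (Bnd_of_degree_le (le_trans (le_of_eq Λ.2.1) hd))
  · exact L_Minv l.2

lemma coeff_superGF (a : Fin 3 →₀ ℕ) :
    coeff (R := ℤ) a superPartitionGF = (superPartitionCount (a 0) (a 1) (a 2) : ℤ) := rfl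

end SPGF

open Finset

/-- The generating function identity
`Σ p(n,m̄,m̲) qⁿ ξ^m̄ γ^m̲ = Π_{k≥0} (1+ξqᵏ)(1+γqᵏ)/((1-ξγqᵏ)(1-q^{k+1}))`,
stated in the equivalent denominator-cleared, truncated form: since every factor with index
`k > n` is `≡ 1` modulo `q^{n+1}`, for every coefficient with `q`-exponent at most `n` one has
`P · Π_{k=0}^{n} (1-ξγqᵏ)(1-q^{k+1}) = Π_{k=0}^{n} (1+ξqᵏ)(1+γqᵏ)`. -/
theorem superPartition_generating_function (n : ℕ) (d : Fin 3 →₀ ℕ) (hd : d 0 ≤ n) :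
    MvPowerSeries.coeff (R := ℤ) d
      (superPartitionGF *
        ∏ k ∈ Finset.range (n + 1),
          ((1 - MvPowerSeries.X 1 * MvPowerSeries.X 2 * MvPowerSeries.X 0 ^ k) *
            (1 - MvPowerSeries.X 0 ^ (k + 1)))) =
    MvPowerSeries.coeff (R := ℤ) d
      (∏ k ∈ Finset.range (n + 1),
        ((1 + MvPowerSeries.X 1 * MvPowerSeries.X 0 ^ k) *
          (1 + MvPowerSeries.X 2 * MvPowerSeries.X 0 ^ k))) := by
  classical
  rw [← SPGF.F_mul_denom n, MvPowerSeries.coeff_mul, MvPowerSeries.coeff_mul]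
  refine Finset.sum_congr rfl fun ab hab => ?_
  have hsum : ab.1 + ab.2 = d := Finset.HasAntidiagonal.mem_antidiagonal.mp hab
  have h1 : ab.1 0 ≤ n := by
    have h := DFunLike.congr_fun hsum 0
    simp only [Finsupp.add_apply] at h
    omega
  congr 1
  rw [SPGF.coeff_superGF, SPGF.count_eq h1, SPGF.coeff_F]
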